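/- Let G = (V, E) be a connected graph and Ĝ = (V, E ∪ F) an augmentation. For e = {s,t} ∈ E ∪ F, the inequality x_e ≤ 1 defines a facet of LMC(G, Ĝ) if and only if there is no uv ∈ F \ {e} such that both s and t are uv-cut-nodes with respect to G. -/

import Mathlib

open Finset

open scoped Classical

variable {V : Type*}

/-- A decomposition of a graph `G`: a partition of the node set all of whose blocks
induce connected subgraphs. -/
def IsDecomposition (G : SimpleGraph V) (P : Set (Set V)) : Prop :=
  Setoid.IsPartition P ∧ ∀ U ∈ P, (G.induce U).Connected

/-- Two nodes lie in a common block of `P`. -/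
def SameBlock (P : Set (Set V)) (u v : V) : Prop :=
  ∃ U ∈ P, u ∈ U ∧ v ∈ U

/-- The edge `e` straddles two distinct blocks of `P`. -/
def Crosses (P : Set (Set V)) (e : Sym2 V) : Prop :=
  ∃ u v, e = s(u, v) ∧ ¬ SameBlock P u v

/-- The multicut of `G` induced by a decomposition `P`. -/
def inducedMulticut (G : SimpleGraph V) (P : Set (Set V)) : Set (Sym2 V) :=
  {e | e ∈ G.edgeSet ∧ Crosses P e}

/-- `M` is a multicut of `G`. -/
def IsMulticut (G : SimpleGraph V) (M : Set (Sym2 V)) : Prop :=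
  ∃ P, IsDecomposition G P ∧ M = inducedMulticut G P

/-- The characteristic vector (in the ambient space `Sym2 V → ℝ`, with coordinates
outside the edge set of `H` pinned to `0`) of the multicut of `H` induced by `P`. -/
noncomputable def multicutVec (H : SimpleGraph V) (P : Set (Set V)) : Sym2 V → ℝ :=
  fun e => if e ∈ H.edgeSet ∧ Crosses P e then 1 else 0

/-- Characteristic vectors of multicuts of `H` lifted from `G`. -/
def liftedVectors (G H : SimpleGraph V) : Set (Sym2 V → ℝ) :=
  {x | ∃ P, IsDecomposition G P ∧ x = multicutVec H P}

/-- The lifted multicut polytope with respect to `G` and `H`. -/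
def LMC (G H : SimpleGraph V) : Set (Sym2 V → ℝ) :=
  convexHull ℝ (liftedVectors G H)

/-- The inequality `f x ≤ b` is valid for `P` and its equality set has affine dimension
`|E ∪ F| - 1`, i.e. one less than the dimension of the corresponding lifted multicut
polytope for the augmented graph `H`. -/
def DefinesFacet (H : SimpleGraph V) (P : Set (Sym2 V → ℝ))
    (f : (Sym2 V → ℝ) → ℝ) (b : ℝ) : Prop :=
  (∀ x ∈ P, f x ≤ b) ∧
  Module.finrank ℝ (affineSpan ℝ {x | x ∈ P ∧ f x = b}).direction + 1 = Nat.card H.edgeSet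

/-- A node `w` is a `u v`-cut-node of `G`: every `u v`-path in `G` passes through `w`. -/
def IsCutNode {V : Type*} (G : SimpleGraph V) (u v w : V) : Prop :=
  ∀ p : G.Walk u v, p.IsPath → w ∈ p.support

/-! ### Auxiliary lemmas -/

section Aux

lemma sameBlock_symm {P : Set (Set V)} {u v : V} (h : SameBlock P u v) : SameBlock P v u := by
  obtain ⟨U, hU, hu, hv⟩ := h; exact ⟨U, hU, hv, hu⟩

lemma crosses_iff {P : Set (Set V)} {x y : V} :
    Crosses P s(x, y) ↔ ¬ SameBlock P x y := by
  constructor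
  · rintro ⟨u, v, huv, hn⟩ hs
    rw [Sym2.eq_iff] at huv
    rcases huv with ⟨rfl, rfl⟩ | ⟨rfl, rfl⟩
    · exact hn hs
    · exact hn (sameBlock_symm hs)
  · exact fun h => ⟨x, y, rfl, h⟩

/-- The partition with one block `U` and singleton blocks elsewhere. -/
def blockPartP (U : Set V) : Set (Set V) :=
  insert U {S | ∃ z ∉ U, S = {z}}

lemma sameBlock_blockPartP {U : Set V} {x y : V} :
    SameBlock (blockPartP U) x y ↔ (x ∈ U ∧ y ∈ U) ∨ x = y := by
  constructor
  · rintro ⟨W, hW, hx, hy⟩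
    rcases hW with rfl | ⟨z, hz, rfl⟩
    · exact Or.inl ⟨hx, hy⟩
    · simp only [Set.mem_singleton_iff] at hx hy; exact Or.inr (hx.trans hy.symm)
  · rintro (⟨hx, hy⟩ | rfl)
    · exact ⟨U, Or.inl rfl, hx, hy⟩
    · by_cases hx : x ∈ U
      · exact ⟨U, Or.inl rfl, hx, hx⟩
      · exact ⟨{x}, Or.inr ⟨x, hx, rfl⟩, rfl, rfl⟩

lemma isDecomposition_blockPartP {G : SimpleGraph V} {U : Set V} (hne : U.Nonempty)
    (hconn : (G.induce U).Connected) : IsDecomposition G (blockPartP U) := by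
  constructor
  · constructor
    · rintro (h | ⟨z, hz, h⟩)
      · exact hne.ne_empty h.symm
      · exact (Set.singleton_nonempty z).ne_empty h.symm
    · intro v
      by_cases hv : v ∈ U
      · refine ⟨U, ⟨Or.inl rfl, hv⟩, ?_⟩
        rintro W ⟨hW | ⟨z, hz, rfl⟩, hvW⟩
        · exact hW
        · simp only [Set.mem_singleton_iff] at hvW; exact absurd (hvW ▸ hv) hz
      · refine ⟨{v}, ⟨Or.inr ⟨v, hv, rfl⟩, rfl⟩, ?_⟩
        rintro W ⟨hW | ⟨z, hz, rfl⟩, hvW⟩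
        · subst hW; exact absurd hvW hv
        · simp only [Set.mem_singleton_iff] at hvW; subst hvW; rfl
  · rintro W (rfl | ⟨z, hz, rfl⟩)
    · exact hconn
    · constructor
      · intro u v
        have : u = v := Subtype.ext (by
          have hu := u.2; have hv := v.2
          simp only [Set.mem_singleton_iff] at hu hv; exact hu.trans hv.symm)
        exact this ▸ SimpleGraph.Reachable.refl _

lemma multicutVec_blockPartP {H : SimpleGraph V} {U : Set V} (h : Sym2 V) :
    multicutVec H (blockPartP U) h =
      if h ∈ H.edgeSet ∧ ¬ (∀ z ∈ h, z ∈ U) then 1 else 0 := by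
  unfold multicutVec
  by_cases hE : h ∈ H.edgeSet
  · induction h with
    | _ x y =>
      have hxy : x ≠ y := (H.mem_edgeSet.mp hE).ne
      have : Crosses (blockPartP U) s(x, y) ↔ ¬ (∀ z ∈ s(x, y), z ∈ U) := by
        rw [crosses_iff, sameBlock_blockPartP]
        simp only [Sym2.mem_iff]
        constructor
        · intro hn hall
          exact hn (Or.inl ⟨hall x (Or.inl rfl), hall y (Or.inr rfl)⟩)
        · rintro hn (⟨hx, hy⟩ | rfl)
          · exact hn (by rintro z (rfl | rfl) <;> assumption)
          · exact hxy rfl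
      simp only [hE, true_and, this]
  · simp [hE]

lemma not_forall_mem_singleton {H : SimpleGraph V} {h : Sym2 V} (hE : h ∈ H.edgeSet) (a : V) :
    ¬ ∀ z ∈ h, z ∈ ({a} : Set V) := by
  induction h with
  | _ x y =>
    intro hall
    have hx := hall x (by simp)
    have hy := hall y (by simp)
    simp only [Set.mem_singleton_iff] at hx hy
    exact (H.mem_edgeSet.mp hE).ne (hx.trans hy.symm)

/-! ### Walk lemmas -/

lemma eq_of_mem_take_mem_drop {G : SimpleGraph V} {u v x w : V} {p : G.Walk u v}
    (hp : p.IsPath) (hx : x ∈ p.support) (h1 : w ∈ (p.takeUntil x hx).support)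
    (h2 : w ∈ (p.dropUntil x hx).support) : w = x := by
  have hnd : p.support.Nodup := hp.support_nodup
  have hsp : p.support = (p.takeUntil x hx).support ++ (p.dropUntil x hx).support.tail := by
    conv_lhs => rw [← p.take_spec hx]
    exact SimpleGraph.Walk.support_append _ _
  rw [hsp, List.nodup_append] at hnd
  have hdc : (p.dropUntil x hx).support = x :: (p.dropUntil x hx).support.tail :=
    SimpleGraph.Walk.support_eq_cons _
  rw [hdc] at h2
  rcases List.mem_cons.mp h2 with rfl | h2
  · rfl
  · exact (hnd.2.2 w h1 w h2 rfl).elim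

/-- Key subpath lemma: a strictly shorter contiguous subpath between two support vertices. -/
lemma exists_subpath {G : SimpleGraph V} {u v x y : V} {p : G.Walk u v} (hp : p.IsPath)
    (hx : x ∈ p.support) (hy : y ∈ p.support) (hne : s(x, y) ≠ s(u, v)) :
    ∃ q : G.Walk x y, q.IsPath ∧ (∀ z ∈ q.support, z ∈ p.support) ∧
      q.support.length < p.support.length := by
  classical
  have hnd : p.support.Nodup := hp.support_nodup
  have finish : ∀ (q : G.Walk x y), q.IsPath → (∀ z ∈ q.support, z ∈ p.support) →
      (∃ z ∈ p.support, z ∉ q.support) →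
      ∃ q : G.Walk x y, q.IsPath ∧ (∀ z ∈ q.support, z ∈ p.support) ∧
        q.support.length < p.support.length := by
    rintro q hq hsub ⟨z, hz, hzq⟩
    refine ⟨q, hq, hsub, ?_⟩
    have h1 : q.support.toFinset.card = q.support.length :=
      List.toFinset_card_of_nodup hq.support_nodup
    have h2 : p.support.toFinset.card = p.support.length := List.toFinset_card_of_nodup hnd
    rw [← h1, ← h2]
    apply Finset.card_lt_card
    constructor
    · intro w hw
      rw [List.mem_toFinset] at hw ⊢
      exact hsub w hw
    · intro hcon
      have := hcon (List.mem_toFinset.mpr hz)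
      exact hzq (List.mem_toFinset.mp this)
  set p₁ := p.takeUntil x hx with hp₁
  set p₂ := p.dropUntil x hx with hp₂
  have hp₁p : p₁.IsPath := hp.takeUntil hx
  have hp₂p : p₂.IsPath := hp.dropUntil hx
  have hsub₁ : p₁.support ⊆ p.support := SimpleGraph.Walk.support_takeUntil_subset p hx
  have hsub₂ : p₂.support ⊆ p.support := SimpleGraph.Walk.support_dropUntil_subset p hx
  have hu₁ : u ∈ p₁.support := p₁.start_mem_support
  have hv₂ : v ∈ p₂.support := p₂.end_mem_support
  by_cases hy₂ : y ∈ p₂.support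
  · set q := p₂.takeUntil y hy₂ with hq
    have hqp : q.IsPath := hp₂p.takeUntil hy₂
    have hqsub : ∀ z ∈ q.support, z ∈ p.support := fun z hz =>
      hsub₂ (SimpleGraph.Walk.support_takeUntil_subset p₂ hy₂ hz)
    refine finish q hqp hqsub ?_
    by_cases hvq : v ∈ q.support
    · have hvy : v = y := eq_of_mem_take_mem_drop hp₂p hy₂ hvq
        (p₂.dropUntil y hy₂).end_mem_support
      refine ⟨u, p.start_mem_support, fun huq => ?_⟩
      have hux : u = x := eq_of_mem_take_mem_drop hp hx hu₁
        (SimpleGraph.Walk.support_takeUntil_subset p₂ hy₂ huq)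
      exact hne (by rw [← hux, ← hvy])
    · exact ⟨v, p.end_mem_support, hvq⟩
  · have hy₁ : y ∈ p₁.support := by
      have := (SimpleGraph.Walk.mem_support_append_iff (p₁) (p₂)).mp
        (by rw [SimpleGraph.Walk.take_spec p hx]; exact hy)
      tauto
    set q := (p₁.dropUntil y hy₁).reverse with hq
    have hqp : q.IsPath := (hp₁p.dropUntil hy₁).reverse
    have hqsupp : ∀ z, z ∈ q.support ↔ z ∈ (p₁.dropUntil y hy₁).support := by
      intro z; rw [hq, SimpleGraph.Walk.support_reverse, List.mem_reverse]
    have hqsub : ∀ z ∈ q.support, z ∈ p.support := fun z hz =>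
      hsub₁ (SimpleGraph.Walk.support_dropUntil_subset p₁ hy₁ ((hqsupp z).mp hz))
    refine finish q hqp hqsub ?_
    by_cases hvq : v ∈ q.support
    · have hvx : v = x := eq_of_mem_take_mem_drop hp hx
        (SimpleGraph.Walk.support_dropUntil_subset p₁ hy₁ ((hqsupp v).mp hvq)) hv₂
      refine ⟨u, p.start_mem_support, fun huq => ?_⟩
      have huy : u = y := eq_of_mem_take_mem_drop hp₁p hy₁
        (p₁.takeUntil y hy₁).start_mem_support ((hqsupp u).mp huq)
      exact hne (by rw [← hvx, ← huy, Sym2.eq_swap])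
    · exact ⟨v, p.end_mem_support, hvq⟩

lemma exists_min_goodpath (G : SimpleGraph V) (a b : V) (g : Sym2 V)
    (hex : ∃ (u v : V) (p : G.Walk u v), s(u, v) = g ∧ p.IsPath ∧
      (a ∉ p.support ∨ b ∉ p.support)) :
    ∃ (u v : V) (p : G.Walk u v), s(u, v) = g ∧ p.IsPath ∧
      (a ∉ p.support ∨ b ∉ p.support) ∧
      ∀ (x y : V) (q : G.Walk x y), s(x, y) = g → q.IsPath →
        (a ∉ q.support ∨ b ∉ q.support) → p.support.length ≤ q.support.length := by
  classical
  set Pred : ℕ → Prop := fun n => ∃ (u v : V) (p : G.Walk u v), s(u, v) = g ∧ p.IsPath ∧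
      (a ∉ p.support ∨ b ∉ p.support) ∧ p.support.length = n with hPred
  have hn : ∃ n, Pred n := by
    obtain ⟨u, v, p, h1, h2, h3⟩ := hex
    exact ⟨p.support.length, u, v, p, h1, h2, h3, rfl⟩
  obtain ⟨u, v, p, h1, h2, h3, h4⟩ := Nat.find_spec hn
  refine ⟨u, v, p, h1, h2, h3, fun x y q hq1 hq2 hq3 => ?_⟩
  rw [h4]
  exact Nat.find_min' hn ⟨x, y, q, hq1, hq2, hq3, rfl⟩

lemma exists_path_in_block {G : SimpleGraph V} {U : Set V} (hconn : (G.induce U).Connected)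
    {u v : V} (hu : u ∈ U) (hv : v ∈ U) :
    ∃ p : G.Walk u v, p.IsPath ∧ ∀ z ∈ p.support, z ∈ U := by
  obtain ⟨w⟩ := hconn.preconnected ⟨u, hu⟩ ⟨v, hv⟩
  let f := (SimpleGraph.Embedding.induce U (G := G)).toHom
  have hw : (w.map f).support = w.support.map (Subtype.val) := by
    rw [SimpleGraph.Walk.support_map]; rfl
  refine ⟨(w.map f).bypass, SimpleGraph.Walk.bypass_isPath _, fun z hz => ?_⟩
  have := SimpleGraph.Walk.support_bypass_subset _ hz
  have this : z ∈ w.support.map Subtype.val := by rw [← hw]; exact this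
  rw [List.mem_map] at this
  obtain ⟨z', _, rfl⟩ := this
  exact z'.2

/-! ### LMC lemmas -/

lemma multicutVec_le_one (H : SimpleGraph V) (P : Set (Set V)) (g : Sym2 V) :
    multicutVec H P g ≤ 1 := by unfold multicutVec; split <;> norm_num

lemma multicutVec_eq_one_iff {H : SimpleGraph V} {P : Set (Set V)} {g : Sym2 V} :
    multicutVec H P g = 1 ↔ g ∈ H.edgeSet ∧ Crosses P g := by
  unfold multicutVec; split <;> simp_all

lemma multicutVec_zero {H : SimpleGraph V} {P : Set (Set V)} {g : Sym2 V}
    (hg : g ∉ H.edgeSet) : multicutVec H P g = 0 := by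
  unfold multicutVec; rw [if_neg (fun h => hg h.1)]

lemma generator_eq_one {G Gh : SimpleGraph V} {P : Set (Set V)} (hP : IsDecomposition G P)
    {a b u v : V} (huv : Gh.Adj u v) (hca : IsCutNode G u v a) (hcb : IsCutNode G u v b)
    (he1 : multicutVec Gh P s(a, b) = 1) : multicutVec Gh P s(u, v) = 1 := by
  have hcond := multicutVec_eq_one_iff.mp he1
  have hnab : ¬ SameBlock P a b := crosses_iff.mp hcond.2
  rw [multicutVec_eq_one_iff]
  refine ⟨Gh.mem_edgeSet.mpr huv, crosses_iff.mpr ?_⟩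
  rintro ⟨U, hU, hu, hv⟩
  obtain ⟨p, hp, hsub⟩ := exists_path_in_block (hP.2 U hU) hu hv
  exact hnab ⟨U, hU, hsub a (hca p hp), hsub b (hcb p hp)⟩

lemma lmc_le_one {G Gh : SimpleGraph V} (g : Sym2 V) {x : Sym2 V → ℝ} (hx : x ∈ LMC G Gh) :
    x g ≤ 1 := by
  have : LMC G Gh ⊆ {y : Sym2 V → ℝ | y g ≤ 1} := by
    apply convexHull_min
    · rintro y ⟨P, hP, rfl⟩; exact multicutVec_le_one Gh P g
    · exact convex_halfSpace_le ⟨fun _ _ => rfl, fun _ _ => rfl⟩ 1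
  exact this hx

lemma lmc_zero {G Gh : SimpleGraph V} {g : Sym2 V} (hg : g ∉ Gh.edgeSet)
    {x : Sym2 V → ℝ} (hx : x ∈ LMC G Gh) : x g = 0 := by
  have : LMC G Gh ⊆ {y : Sym2 V → ℝ | y g = 0} := by
    apply convexHull_min
    · rintro y ⟨P, hP, rfl⟩; exact multicutVec_zero hg
    · exact convex_hyperplane ⟨fun _ _ => rfl, fun _ _ => rfl⟩ 0
  exact this hx

lemma lmc_coord_eq_one {G Gh : SimpleGraph V} {a b u v : V}
    (huv : Gh.Adj u v) (hca : IsCutNode G u v a) (hcb : IsCutNode G u v b)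
    {x : Sym2 V → ℝ} (hx : x ∈ LMC G Gh) (hxe : x s(a, b) = 1) : x s(u, v) = 1 := by
  rw [LMC, _root_.convexHull_eq] at hx
  obtain ⟨ι, t, w, z, hw0, hw1, hz, hcm⟩ := hx
  rw [Finset.centerMass_eq_of_sum_1 _ _ hw1] at hcm
  have hcoord : ∀ g : Sym2 V, x g = ∑ i ∈ t, w i * z i g := by
    intro g
    rw [← hcm, Finset.sum_apply]
    simp [Pi.smul_apply, smul_eq_mul]
  have hsum0 : ∑ i ∈ t, w i * (1 - z i s(a, b)) = 0 := by
    rw [Finset.sum_congr rfl (fun i _ => mul_sub (w i) 1 (z i s(a, b))), Finset.sum_sub_distrib]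
    rw [← hcoord]
    simp [hw1, hxe]
  have hterm : ∀ i ∈ t, w i * (1 - z i s(a, b)) = 0 := by
    refine (Finset.sum_eq_zero_iff_of_nonneg ?_).mp hsum0
    intro i hi
    obtain ⟨P, hP, hzP⟩ := hz i hi
    have := multicutVec_le_one Gh P s(a, b)
    rw [← hzP] at this
    have h1 : 0 ≤ 1 - z i s(a, b) := by linarith
    exact mul_nonneg (hw0 i hi) h1
  rw [hcoord s(u, v)]
  rw [← hw1]
  apply Finset.sum_congr rfl
  intro i hi
  by_cases hwi : w i = 0
  · simp [hwi]
  · have hzi : z i s(a, b) = 1 := by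
      have := hterm i hi
      rcases mul_eq_zero.mp this with h | h
      · exact absurd h hwi
      · linarith
    obtain ⟨P, hP, hzP⟩ := hz i hi
    rw [hzP] at hzi ⊢
    rw [generator_eq_one hP huv hca hcb hzi, mul_one]

/-! ### Dimension lemmas -/

lemma finrank_direction_le [Fintype V] (S : Set (Sym2 V → ℝ)) (B : Set (Sym2 V))
    (c : Sym2 V → ℝ) (hS : ∀ x ∈ S, ∀ g ∉ B, x g = c g) :
    Module.finrank ℝ (affineSpan ℝ S).direction ≤ B.ncard := by
  classical
  set W : Submodule ℝ (Sym2 V → ℝ) :=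
    { carrier := {d | ∀ g ∉ B, d g = 0}
      add_mem' := fun {x y} hx hy g hg => by
        simp only [Pi.add_apply, hx g hg, hy g hg, add_zero]
      zero_mem' := fun g _ => rfl
      smul_mem' := fun r x hx g hg => by
        simp only [Pi.smul_apply, hx g hg, smul_zero] } with hW
  have h1 : (affineSpan ℝ S).direction ≤ W := by
    rw [direction_affineSpan, vectorSpan_def]
    rw [Submodule.span_le]
    rintro d hd
    obtain ⟨x, hx, y, hy, rfl⟩ := hd
    intro g hg
    show (x -ᵥ y) g = 0
    rw [vsub_eq_sub, Pi.sub_apply, hS x hx g hg, hS y hy g hg, sub_self]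
  have h2 : Module.finrank ℝ W ≤ B.ncard := by
    have hinj : Function.Injective
        ((LinearMap.funLeft ℝ ℝ (fun g : B => (g : Sym2 V))).comp W.subtype) := by
      intro d₁ d₂ hd
      apply Subtype.ext
      funext g
      by_cases hg : g ∈ B
      · exact congrFun hd ⟨g, hg⟩
      · rw [d₁.2 g hg, d₂.2 g hg]
    have := LinearMap.finrank_le_finrank_of_injective hinj
    rwa [Module.finrank_fintype_fun_eq_card, ← Nat.card_eq_fintype_card,
      Nat.card_coe_set_eq] at this
  exact le_trans (Submodule.finrank_mono h1) h2

lemma card_le_finrank_direction [Fintype V] (S : Set (Sym2 V → ℝ)) {ι : Type*} [Fintype ι]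
    (d : ι → (Sym2 V → ℝ)) (hli : LinearIndependent ℝ d)
    (hmem : ∀ i, d i ∈ (affineSpan ℝ S).direction) :
    Fintype.card ι ≤ Module.finrank ℝ (affineSpan ℝ S).direction := by
  have : LinearIndependent ℝ (fun i => (⟨d i, hmem i⟩ : (affineSpan ℝ S).direction)) := by
    apply LinearIndependent.of_comp ((affineSpan ℝ S).direction.subtype)
    exact hli
  exact this.fintype_card_le_finrank

end Aux

/-- the inequality `x_e ≤ 1` for `e = s(a,b) ∈ E ∪ F` defines a facet of
`LMC(G, Gh)` iff there is no `uv ∈ F \ {e}` such that both `a` and `b` are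
`uv`-cut-nodes with respect to `G`. -/
theorem upper_box_facet_iff
    {V : Type*} [Fintype V] (G Gh : SimpleGraph V)
    (hG : G.Connected) (hle : G ≤ Gh)
    (a b : V) (hab : Gh.Adj a b) :
    DefinesFacet Gh (LMC G Gh) (fun x => x s(a, b)) 1 ↔
      ¬ ∃ u v : V, Gh.Adj u v ∧ ¬ G.Adj u v ∧ s(u, v) ≠ s(a, b) ∧
        IsCutNode G u v a ∧ IsCutNode G u v b := by
  classical
  have hE : s(a, b) ∈ Gh.edgeSet := Gh.mem_edgeSet.mpr hab
  have hfin : Gh.edgeSet.Finite := Set.toFinite _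
  set S : Set (Sym2 V → ℝ) :=
    {x | x ∈ LMC G Gh ∧ (fun x : Sym2 V → ℝ => x s(a, b)) x = 1} with hSdef
  have hcard : Nat.card Gh.edgeSet = Gh.edgeSet.ncard := Nat.card_coe_set_eq _
  constructor
  · -- forward: facet implies no bad pair
    rintro ⟨-, hdim⟩ ⟨u, v, huv, hGuv, hne, hca, hcb⟩
    have hfE : s(u, v) ∈ Gh.edgeSet := Gh.mem_edgeSet.mpr huv
    have hpair : ({s(a, b), s(u, v)} : Set (Sym2 V)) ⊆ Gh.edgeSet := by
      rintro g (rfl | rfl) <;> assumption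
    have hub : Module.finrank ℝ (affineSpan ℝ S).direction ≤
        (Gh.edgeSet \ {s(a, b), s(u, v)}).ncard := by
      apply finrank_direction_le S _ (fun g => if g ∈ Gh.edgeSet then 1 else 0)
      intro x hx g hg
      rw [Set.mem_diff] at hg
      push_neg at hg
      by_cases hgE : g ∈ Gh.edgeSet
      · rcases hg hgE with rfl | rfl
        · rw [if_pos hgE]; exact hx.2
        · rw [if_pos hgE]; exact lmc_coord_eq_one huv hca hcb hx.1 hx.2
      · rw [if_neg hgE]; exact lmc_zero hgE hx.1
    have hnc : (Gh.edgeSet \ {s(a, b), s(u, v)}).ncard =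
        Gh.edgeSet.ncard - 2 := by
      rw [Set.ncard_diff hpair, Set.ncard_pair (Ne.symm hne)]
    have h2n : 2 ≤ Gh.edgeSet.ncard := by
      have := Set.ncard_le_ncard hpair hfin
      rwa [Set.ncard_pair (Ne.symm hne)] at this
    have hdim' : Module.finrank ℝ (affineSpan ℝ S).direction + 1 = Nat.card Gh.edgeSet := hdim
    rw [hcard] at hdim'
    rw [hnc] at hub
    obtain ⟨m, hm⟩ : ∃ m, Module.finrank ℝ (affineSpan ℝ S).direction = m := ⟨_, rfl⟩
    obtain ⟨n, hn⟩ : ∃ n, Gh.edgeSet.ncard = n := ⟨_, rfl⟩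
    rw [hm, hn] at hdim' hub
    rw [hn] at h2n
    clear hdim hm hn
    omega
  · -- backward: no bad pair implies facet
    intro hno
    have hval : ∀ x ∈ LMC G Gh, (fun x : Sym2 V → ℝ => x s(a, b)) x ≤ 1 :=
      fun x hx => lmc_le_one _ hx
    refine ⟨hval, ?_⟩
    set A : Set (Sym2 V) := Gh.edgeSet \ {s(a, b)} with hAdef
    have hAcard : A.ncard = Gh.edgeSet.ncard - 1 := Set.ncard_diff_singleton_of_mem hE
    have h1n : 0 < Gh.edgeSet.ncard := (Set.ncard_pos hfin).mpr ⟨_, hE⟩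
    -- upper bound
    have hub : Module.finrank ℝ (affineSpan ℝ S).direction ≤ A.ncard := by
      apply finrank_direction_le S _ (fun g => if g ∈ Gh.edgeSet then 1 else 0)
      intro x hx g hg
      rw [hAdef, Set.mem_diff] at hg
      push_neg at hg
      by_cases hgE : g ∈ Gh.edgeSet
      · have : g = s(a, b) := by simpa using hg hgE
        subst this
        rw [if_pos hgE]; exact hx.2
      · rw [if_neg hgE]; exact lmc_zero hgE hx.1
    -- existence of good paths
    have hexgood : ∀ g : Sym2 V, g ∈ Gh.edgeSet → g ≠ s(a, b) →
        ∃ (u v : V) (p : G.Walk u v), s(u, v) = g ∧ p.IsPath ∧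
          (a ∉ p.support ∨ b ∉ p.support) := by
      intro g hgE hgne
      induction g with
      | _ u v =>
        have huv : Gh.Adj u v := Gh.mem_edgeSet.mp hgE
        by_cases hGuv : G.Adj u v
        · refine ⟨u, v, SimpleGraph.Walk.cons hGuv SimpleGraph.Walk.nil, rfl, ?_, ?_⟩
          · simp [SimpleGraph.Walk.isPath_def, hGuv.ne]
          · by_contra hcon
            push_neg at hcon
            obtain ⟨ha, hb⟩ := hcon
            simp only [SimpleGraph.Walk.support_cons, SimpleGraph.Walk.support_nil,
              List.mem_cons, List.mem_singleton, List.not_mem_nil, or_false] at ha hb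
            apply hgne
            rcases ha with rfl | rfl <;> rcases hb with rfl | rfl
            · exact absurd rfl hab.ne
            · rfl
            · exact Sym2.eq_swap
            · exact absurd rfl hab.ne.symm
        · have hcut : ¬ (IsCutNode G u v a ∧ IsCutNode G u v b) := fun ⟨h1, h2⟩ =>
            hno ⟨u, v, huv, hGuv, hgne, h1, h2⟩
          rcases not_and_or.mp hcut with hc | hc
          · unfold IsCutNode at hc
            push_neg at hc
            obtain ⟨p, hp1, hp2⟩ := hc
            exact ⟨u, v, p, rfl, hp1, Or.inl hp2⟩
          · unfold IsCutNode at hc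
            push_neg at hc
            obtain ⟨p, hp1, hp2⟩ := hc
            exact ⟨u, v, p, rfl, hp1, Or.inr hp2⟩
    -- choose minimal good paths
    have hsel : ∀ i : A, ∃ (u v : V) (p : G.Walk u v), s(u, v) = (i : Sym2 V) ∧ p.IsPath ∧
        (a ∉ p.support ∨ b ∉ p.support) ∧
        ∀ (x y : V) (q : G.Walk x y), s(x, y) = (i : Sym2 V) → q.IsPath →
          (a ∉ q.support ∨ b ∉ q.support) → p.support.length ≤ q.support.length := by
      intro i
      exact exists_min_goodpath G a b i
        (hexgood i i.2.1 (by simpa using i.2.2))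
    choose pu pv pp hps hppath hpgood hpmin using hsel
    set Uset : A → Set V := fun i => {z | z ∈ (pp i).support} with hUset
    set xg : A → (Sym2 V → ℝ) := fun i => multicutVec Gh (blockPartP (Uset i)) with hxg
    set x0 : Sym2 V → ℝ := multicutVec Gh (blockPartP {a}) with hx0
    set d : A → (Sym2 V → ℝ) := fun i => xg i - x0 with hd
    -- d formula
    have d_apply : ∀ (i : A) (h : Sym2 V),
        d i h = if h ∈ Gh.edgeSet ∧ (∀ z ∈ h, z ∈ Uset i) then (-1 : ℝ) else 0 := by
      intro i h
      have hrfl : d i h =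
          multicutVec Gh (blockPartP (Uset i)) h - multicutVec Gh (blockPartP {a}) h := rfl
      rw [hrfl, multicutVec_blockPartP, multicutVec_blockPartP]
      by_cases hgE : h ∈ Gh.edgeSet
      · have hns : ¬ ∀ z ∈ h, z ∈ ({a} : Set V) := not_forall_mem_singleton hgE a
        by_cases hI : ∀ z ∈ h, z ∈ Uset i
        · rw [if_neg (fun hcon => hcon.2 hI), if_pos ⟨hgE, hns⟩, if_pos ⟨hgE, hI⟩]; norm_num
        · rw [if_pos ⟨hgE, hI⟩, if_pos ⟨hgE, hns⟩, if_neg (fun hcon => hI hcon.2)]; norm_num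
      · rw [if_neg (fun hcon => hgE hcon.1), if_neg (fun hcon => hgE hcon.1),
          if_neg (fun hcon => hgE hcon.1)]
        norm_num
    -- membership of generators in S
    have hx0S : x0 ∈ S := by
      constructor
      · apply subset_convexHull
        refine ⟨blockPartP {a}, isDecomposition_blockPartP ⟨a, rfl⟩ ?_, rfl⟩
        constructor
        · intro u v
          have : u = v := Subtype.ext (by
            have hu := u.2; have hv := v.2
            simp only [Set.mem_singleton_iff] at hu hv; exact hu.trans hv.symm)
          exact this ▸ SimpleGraph.Reachable.refl _
      · show multicutVec Gh (blockPartP {a}) s(a, b) = 1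
        rw [multicutVec_blockPartP, if_pos ⟨hE, not_forall_mem_singleton hE a⟩]
    have hUconn : ∀ i : A, (G.induce (Uset i)).Connected := fun i =>
      (pp i).connected_induce_support
    have hxgS : ∀ i : A, xg i ∈ S := by
      intro i
      constructor
      · apply subset_convexHull
        exact ⟨blockPartP (Uset i),
          isDecomposition_blockPartP ⟨pu i, (pp i).start_mem_support⟩ (hUconn i), rfl⟩
      · show multicutVec Gh (blockPartP (Uset i)) s(a, b) = 1
        rw [multicutVec_blockPartP]
        rw [if_pos]
        refine ⟨hE, fun hall => ?_⟩
        rcases hpgood i with hgood | hgood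
        · exact hgood (hall a (Sym2.mem_mk_left a b))
        · exact hgood (hall b (Sym2.mem_mk_right a b))
    have hdmem : ∀ i : A, d i ∈ (affineSpan ℝ S).direction := by
      intro i
      have : d i = xg i -ᵥ x0 := rfl
      rw [this]
      exact AffineSubspace.vsub_mem_direction
        (subset_affineSpan ℝ S (hxgS i)) (subset_affineSpan ℝ S hx0S)
    -- linear independence
    have hli : LinearIndependent ℝ d := by
      rw [linearIndependent_iff']
      intro s c hsum i hi
      by_contra hci
      set t := s.filter (fun j => c j ≠ 0) with ht
      have htne : t.Nonempty := ⟨i, Finset.mem_filter.mpr ⟨hi, hci⟩⟩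
      obtain ⟨i₀, hi₀t, hmax⟩ := t.exists_max_image (fun j => (pp j).support.length) htne
      have hi₀s : i₀ ∈ s := Finset.mem_of_mem_filter i₀ hi₀t
      have hc₀ : c i₀ ≠ 0 := (Finset.mem_filter.mp hi₀t).2
      have heval : (∑ j ∈ s, c j • d j) (i₀ : Sym2 V) = 0 := by rw [hsum]; rfl
      rw [Finset.sum_apply] at heval
      have hdiag : d i₀ (i₀ : Sym2 V) = -1 := by
        rw [d_apply]
        refine if_pos ⟨i₀.2.1, fun z hz => ?_⟩
        rw [← hps i₀, Sym2.mem_iff] at hz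
        rcases hz with rfl | rfl
        · exact (pp i₀).start_mem_support
        · exact (pp i₀).end_mem_support
      have hkey : ∑ j ∈ s, (c j • d j) (i₀ : Sym2 V) = (c i₀ • d i₀) (i₀ : Sym2 V) := by
        apply Finset.sum_eq_single_of_mem i₀ hi₀s
        intro j hjs hji₀
        by_cases hcj : c j = 0
        · simp [hcj]
        · have hjt : j ∈ t := Finset.mem_filter.mpr ⟨hjs, hcj⟩
          by_cases hdj : d j (i₀ : Sym2 V) = 0
          · simp [Pi.smul_apply, hdj]
          · exfalso
            rw [d_apply] at hdj
            have hcond : (i₀ : Sym2 V) ∈ Gh.edgeSet ∧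
                ∀ z ∈ (i₀ : Sym2 V), z ∈ Uset j := by
              by_contra hcon
              rw [if_neg hcon] at hdj
              exact hdj rfl
            have hxm : pu i₀ ∈ (pp j).support :=
              hcond.2 (pu i₀) (by rw [← hps i₀]; exact Sym2.mem_mk_left _ _)
            have hym : pv i₀ ∈ (pp j).support :=
              hcond.2 (pv i₀) (by rw [← hps i₀]; exact Sym2.mem_mk_right _ _)
            have hneq : s(pu i₀, pv i₀) ≠ s(pu j, pv j) := by
              rw [hps i₀, hps j]
              exact fun hcon => hji₀ (Subtype.coe_injective hcon).symm
            obtain ⟨q, hq1, hq2, hq3⟩ := exists_subpath (hppath j) hxm hym hneq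
            have hqgood : a ∉ q.support ∨ b ∉ q.support := by
              rcases hpgood j with hg | hg
              · exact Or.inl (fun hc => hg (hq2 a hc))
              · exact Or.inr (fun hc => hg (hq2 b hc))
            have hmin := hpmin i₀ (pu i₀) (pv i₀) q (hps i₀) hq1 hqgood
            have hmaxj := hmax j hjt
            omega
      rw [hkey] at heval
      rw [Pi.smul_apply, hdiag, smul_eq_mul] at heval
      have : c i₀ = 0 := by linarith
      exact hc₀ this
    -- conclude
    have hlow := card_le_finrank_direction S d hli hdmem
    have hAcard' : Fintype.card A = A.ncard := by
      rw [← Nat.card_eq_fintype_card, Nat.card_coe_set_eq]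
    rw [hAcard'] at hlow
    show Module.finrank ℝ (affineSpan ℝ S).direction + 1 = Nat.card Gh.edgeSet
    rw [hcard]
    obtain ⟨m, hm⟩ : ∃ m, Module.finrank ℝ (affineSpan ℝ S).direction = m := ⟨_, rfl⟩
    obtain ⟨n, hn⟩ : ∃ n, Gh.edgeSet.ncard = n := ⟨_, rfl⟩
    obtain ⟨k, hk⟩ : ∃ k, A.ncard = k := ⟨_, rfl⟩
    rw [hm] at hub hlow ⊢
    rw [hn] at h1n hAcard ⊢
    rw [hk] at hub hlow hAcard
    clear hm hn hk
    omega
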